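/- arXiv:1806.03700 — 3 statements merged into one kernel-verified Lean document; each statement's English description precedes it below -/
import Mathlib

section
/- Let g ≥ 2 and let s ≤ g. Let R be a set of elements of FreeGroup (Fin s), and let G = PresentedGroup R. Let N be the normal closure in SurfaceGroup g of the union of: the images of the elements of R under the homomorphism FreeGroup (Fin s) →* SurfaceGroup g sending the i-th free generator to aᵢ₊₁, together with the elements a_{s+1},…,a_g, b₁,…,b_g. Then (SurfaceGroup g)/N is isomorphic to G. -/
open scoped commutatorElement

/-- The surface relator `∏ ⁅aᵢ,bᵢ⁆` in `FreeGroup (Fin (2*g))`. -/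
def surfaceRelator (g : ℕ) : FreeGroup (Fin (2 * g)) :=
  ((List.finRange g).map fun i =>
    ⁅FreeGroup.of (⟨i.1, by omega⟩ : Fin (2 * g)),
     FreeGroup.of (⟨g + i.1, by omega⟩ : Fin (2 * g))⁆).prod

/-- The genus-`g` surface group. -/
def SurfaceGroup (g : ℕ) : Type :=
  PresentedGroup ({surfaceRelator g} : Set (FreeGroup (Fin (2 * g))))

instance (g : ℕ) : Group (SurfaceGroup g) := by unfold SurfaceGroup; infer_instance

/-- The generator `a_{i+1}` of the surface group, for `i : Fin g`. -/
def SurfaceGroup.a {g : ℕ} (i : Fin g) : SurfaceGroup g :=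
  PresentedGroup.of (⟨i.1, by omega⟩ : Fin (2 * g))

/-- The generator `b_{i+1}` of the surface group, for `i : Fin g`. -/
def SurfaceGroup.b {g : ℕ} (i : Fin g) : SurfaceGroup g :=
  PresentedGroup.of (⟨g + i.1, by omega⟩ : Fin (2 * g))

/-- The homomorphism `FreeGroup (Fin s) →* SurfaceGroup g` (for `s ≤ g`)
sending the `i`-th free generator to `a_{i+1}`. -/
def toSurfaceGroup {g s : ℕ} (hs : s ≤ g) : FreeGroup (Fin s) →* SurfaceGroup g :=
  FreeGroup.lift fun i => SurfaceGroup.a (⟨i.1, by omega⟩ : Fin g)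

section Aux

variable {g s : ℕ} (hs : s ≤ g) (R : Set (FreeGroup (Fin s)))

/-- The target map on generators. -/
def auxF (i : Fin (2 * g)) : PresentedGroup R :=
  if h : i.1 < s then PresentedGroup.of (⟨i.1, h⟩ : Fin s) else 1

theorem auxF_kills_relator (hs : s ≤ g) : ∀ r ∈ ({surfaceRelator g} : Set (FreeGroup (Fin (2 * g)))),
    FreeGroup.lift (auxF (g := g) R) r = 1 := by
  rintro r rfl
  unfold surfaceRelator
  rw [map_list_prod, List.map_map]
  apply List.prod_eq_one
  intro x hx
  simp only [List.mem_map] at hx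
  obtain ⟨i, -, rfl⟩ := hx
  have hb : auxF R (⟨g + i.1, by omega⟩ : Fin (2 * g)) = 1 := by
    unfold auxF
    exact dif_neg (show ¬ (g + i.1 < s) by omega)
  simp only [Function.comp_apply, map_commutatorElement, FreeGroup.lift_apply_of, hb,
    commutatorElement_one_right]

/-- The map `SurfaceGroup g →* PresentedGroup R`. -/
def auxPhi : SurfaceGroup g →* PresentedGroup R :=
  PresentedGroup.toGroup (auxF_kills_relator R hs)

theorem auxPhi_a (i : Fin g) :
    auxPhi hs R (SurfaceGroup.a i) = auxF R (⟨i.1, by omega⟩ : Fin (2 * g)) :=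
  PresentedGroup.toGroup.of _

theorem auxPhi_b (i : Fin g) :
    auxPhi hs R (SurfaceGroup.b i) = auxF R (⟨g + i.1, by omega⟩ : Fin (2 * g)) :=
  PresentedGroup.toGroup.of _

end Aux

/-- Writing a presented group `G = ⟨x₁,…,x_s ∣ R⟩` (with `s ≤ g`) as the deck
transformation group of a cover of the genus-`g` surface: the quotient of the
surface group by the normal closure of the relators `R` (rewritten in
`a₁,…,a_s`), together with `a_{s+1},…,a_g, b₁,…,b_g`, is isomorphic to `G`. -/
theorem quotient_of_surface_group_iso_presented_group
    (g s : ℕ) (hg : 2 ≤ g) (hs : s ≤ g) (R : Set (FreeGroup (Fin s))) :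
    letI N : Subgroup (SurfaceGroup g) :=
      Subgroup.normalClosure
        (toSurfaceGroup hs '' R ∪
          {x | ∃ i : Fin g, s ≤ i.1 ∧ x = SurfaceGroup.a i} ∪
          {x | ∃ i : Fin g, x = SurfaceGroup.b i})
    Nonempty ((SurfaceGroup g ⧸ N) ≃* PresentedGroup R) := by
  let N : Subgroup (SurfaceGroup g) :=
    Subgroup.normalClosure
      (toSurfaceGroup hs '' R ∪
        {x | ∃ i : Fin g, s ≤ i.1 ∧ x = SurfaceGroup.a i} ∪
        {x | ∃ i : Fin g, x = SurfaceGroup.b i})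
  show Nonempty ((SurfaceGroup g ⧸ N) ≃* PresentedGroup R)
  have hN : N.Normal := Subgroup.normalClosure_normal
  -- membership facts
  have hmemR : ∀ r ∈ R, toSurfaceGroup hs r ∈ N := fun r hr =>
    Subgroup.subset_normalClosure (Or.inl (Or.inl ⟨r, hr, rfl⟩))
  have hmema : ∀ i : Fin g, s ≤ i.1 → SurfaceGroup.a i ∈ N := fun i hi =>
    Subgroup.subset_normalClosure (Or.inl (Or.inr ⟨i, hi, rfl⟩))
  have hmemb : ∀ i : Fin g, SurfaceGroup.b i ∈ N := fun i =>
    Subgroup.subset_normalClosure (Or.inr ⟨i, rfl⟩)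
  -- φ : quotient →* PresentedGroup R
  have hker : ∀ x ∈ N, auxPhi hs R x = 1 := by
    intro x hx
    refine Subgroup.normalClosure_le_normal (N := (auxPhi hs R).ker) ?_ hx
    rintro y (⟨⟨r, hr, rfl⟩ | ⟨i, hi, rfl⟩⟩ | ⟨i, rfl⟩) <;>
      simp only [SetLike.mem_coe, MonoidHom.mem_ker]
    · have : (auxPhi hs R).comp (toSurfaceGroup hs) =
          QuotientGroup.mk' (Subgroup.normalClosure R) := by
        apply FreeGroup.ext_hom
        intro x
        simp only [MonoidHom.comp_apply, toSurfaceGroup, FreeGroup.lift_apply_of]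
        rw [auxPhi_a]
        unfold auxF
        rw [dif_pos x.2]
        rfl
      have h2 : auxPhi hs R (toSurfaceGroup hs r) =
          QuotientGroup.mk' (Subgroup.normalClosure R) r := by
        rw [← MonoidHom.comp_apply, this]
        rfl
      rw [h2]
      exact (QuotientGroup.eq_one_iff r).2 (Subgroup.subset_normalClosure hr)
    · rw [auxPhi_a]
      unfold auxF
      exact dif_neg (show ¬ (i.1 < s) by omega)
    · rw [auxPhi_b]
      unfold auxF
      exact dif_neg (show ¬ (g + i.1 < s) by omega)
  let φ : (SurfaceGroup g ⧸ N) →* PresentedGroup R :=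
    QuotientGroup.lift N (auxPhi hs R) hker
  -- ψ : PresentedGroup R →* quotient
  have hψ : ∀ r ∈ R, FreeGroup.lift
      (fun i : Fin s => ((SurfaceGroup.a (⟨i.1, by omega⟩ : Fin g) : SurfaceGroup g) :
        SurfaceGroup g ⧸ N)) r = 1 := by
    intro r hr
    have : FreeGroup.lift
        (fun i : Fin s => ((SurfaceGroup.a (⟨i.1, by omega⟩ : Fin g) : SurfaceGroup g) :
          SurfaceGroup g ⧸ N)) =
        (QuotientGroup.mk' N).comp (toSurfaceGroup hs) := by
      apply FreeGroup.ext_hom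
      intro x
      simp [toSurfaceGroup]
    rw [this, MonoidHom.comp_apply]
    exact (QuotientGroup.eq_one_iff _).2 (hmemR r hr)
  let ψ : PresentedGroup R →* (SurfaceGroup g ⧸ N) := PresentedGroup.toGroup hψ
  have hψ_of : ∀ i : Fin s, ψ (PresentedGroup.of i) =
      ((SurfaceGroup.a (⟨i.1, by omega⟩ : Fin g) : SurfaceGroup g) : SurfaceGroup g ⧸ N) :=
    fun i => PresentedGroup.toGroup.of hψ
  -- compositions
  have h1 : φ.comp ψ = MonoidHom.id _ := by
    apply PresentedGroup.ext
    intro x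
    rw [MonoidHom.comp_apply, hψ_of, MonoidHom.id_apply]
    show φ (QuotientGroup.mk _) = _
    rw [show φ = QuotientGroup.lift N (auxPhi hs R) (show N ≤ (auxPhi hs R).ker from fun x hx => hker x hx) from rfl, QuotientGroup.lift_mk', auxPhi_a]
    unfold auxF
    rw [dif_pos (show x.1 < s from x.2)]
  have h2 : ψ.comp φ = MonoidHom.id _ := by
    apply QuotientGroup.monoidHom_ext
    apply PresentedGroup.ext (rels := ({surfaceRelator g} : Set (FreeGroup (Fin (2 * g)))))
    intro x
    show ψ (φ (QuotientGroup.mk (PresentedGroup.of x))) = _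
    show ψ (auxPhi hs R (PresentedGroup.of x)) = (QuotientGroup.mk (PresentedGroup.of x) : SurfaceGroup g ⧸ N)
    by_cases hx : x.1 < g
    · have hxa : PresentedGroup.of (rels := ({surfaceRelator g} : Set (FreeGroup (Fin (2 * g)))))
          x = SurfaceGroup.a ⟨x.1, hx⟩ := by
        unfold SurfaceGroup.a; congr
      rw [hxa, auxPhi_a]
      by_cases hxs : x.1 < s
      · unfold auxF
        rw [dif_pos hxs, hψ_of]
      · unfold auxF
        rw [dif_neg (show ¬ (x.1 < s) by omega), map_one]
        exact ((QuotientGroup.eq_one_iff _).2 (hmema ⟨x.1, hx⟩ (show s ≤ x.1 by omega))).symm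
    · have hx2 : x.1 - g < g := by omega
      have hxval : x = (⟨g + ((⟨x.1 - g, hx2⟩ : Fin g)).1, by omega⟩ : Fin (2 * g)) := by
        apply Fin.ext
        show x.1 = g + (x.1 - g)
        omega
      have hxb : PresentedGroup.of (rels := ({surfaceRelator g} : Set (FreeGroup (Fin (2 * g)))))
          x = SurfaceGroup.b ⟨x.1 - g, hx2⟩ :=
        congrArg (PresentedGroup.of (rels := ({surfaceRelator g} :
          Set (FreeGroup (Fin (2 * g)))))) hxval
      rw [hxb, auxPhi_b]
      unfold auxF
      rw [dif_neg (show ¬ (g + (x.1 - g) < s) by omega), map_one]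
      exact ((QuotientGroup.eq_one_iff _).2 (hmemb ⟨x.1 - g, hx2⟩)).symm
  have hleft : Function.LeftInverse ψ φ := fun x => by
    rw [← MonoidHom.comp_apply, h2, MonoidHom.id_apply]
  have hright : Function.RightInverse ψ φ := fun x => by
    rw [← MonoidHom.comp_apply, h1, MonoidHom.id_apply]
  exact ⟨{ toFun := φ, invFun := ψ, left_inv := hleft, right_inv := hright,
           map_mul' := map_mul φ }⟩
end

section
/- Fix g ≥ 2. Let φ : SurfaceGroup g →* Multiplicative (Fin (2g) → ZMod 2) be the homomorphism sending each standard generator (a₁,…,a_g,b₁,…,b_g, indexed by Fin (2g)) to the corresponding standard basis vector (this is well-defined since the surface relator is a product of commutators). For each nonempty subset A of Fin (2g), let c_A be the image in SurfaceGroup g of the increasing-order product of the free generators indexed by A. Then the kernel of φ (i.e., the fundamental group of the mod 2 homology cover) equals the normal closure in SurfaceGroup g of the 2^{2g} − 1 squares { c_A² : A a nonempty subset of Fin (2g) }. -/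
open scoped commutatorElement

/-- The map to mod 2 homology `(ℤ/2)^{2g}` is well defined on the surface group,
since the surface relator is a product of commutators. -/
theorem surfaceRelator_maps_to_one_mod2 (g : ℕ) :
    ∀ r ∈ ({surfaceRelator g} : Set (FreeGroup (Fin (2 * g)))),
      FreeGroup.lift
        (fun i => Multiplicative.ofAdd (Pi.single i 1 : Fin (2 * g) → ZMod 2)) r = 1 := by
  intro r hr
  rw [Set.mem_singleton_iff] at hr
  subst hr
  unfold surfaceRelator
  rw [map_list_prod, List.map_map]
  apply List.prod_eq_one
  intro x hx
  simp only [List.mem_map, Function.comp_apply] at hx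
  obtain ⟨i, -, rfl⟩ := hx
  rw [map_commutatorElement]
  exact commutatorElement_eq_one_iff_mul_comm.mpr (mul_comm _ _)

/-- The homomorphism `SurfaceGroup g →* (ℤ/2)^{2g}` sending each standard
generator to the corresponding standard basis vector. -/
def surfaceMod2 (g : ℕ) : SurfaceGroup g →* Multiplicative (Fin (2 * g) → ZMod 2) :=
  PresentedGroup.toGroup (surfaceRelator_maps_to_one_mod2 g)

/-- The image in the surface group of the increasing-order product of the free
generators indexed by the finite set `A`. -/
def incProdImage {g : ℕ} (A : Finset (Fin (2 * g))) : SurfaceGroup g :=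
  QuotientGroup.mk' (Subgroup.normalClosure {surfaceRelator g})
    ((A.sort (· ≤ ·)).map FreeGroup.of).prod

/-- The fundamental group of the mod 2 homology cover of the genus-`g` surface
is the normal closure of the `2^{2g} − 1` squares `c_A²`. -/
theorem ker_surfaceMod2_eq_normalClosure_squares (g : ℕ) (hg : 2 ≤ g) :
    (surfaceMod2 g).ker =
      Subgroup.normalClosure
        {x : SurfaceGroup g |
          ∃ A : Finset (Fin (2 * g)), A.Nonempty ∧ x = (incProdImage A) ^ 2} := by
  have sq_one : ∀ y : Multiplicative (Fin (2 * g) → ZMod 2), y ^ 2 = 1 := by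
    intro y
    have h : ∀ a : ZMod 2, a + a = 0 := by decide
    rw [pow_two]
    apply Multiplicative.toAdd.injective
    funext i
    exact h _
  set S : Set (SurfaceGroup g) :=
    {x | ∃ A : Finset (Fin (2 * g)), A.Nonempty ∧ x = (incProdImage A) ^ 2} with hSdef
  set N : Subgroup (SurfaceGroup g) := Subgroup.normalClosure S with hNdef
  let π : SurfaceGroup g →* SurfaceGroup g ⧸ N := QuotientGroup.mk' N
  let q : Fin (2 * g) → SurfaceGroup g ⧸ N :=
    fun i => π (PresentedGroup.of (rels := {surfaceRelator g}) i)
  have hπS : ∀ x ∈ S, π x = 1 := fun x hx => by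
    rw [← MonoidHom.mem_ker, QuotientGroup.ker_mk']
    exact Subgroup.subset_normalClosure hx
  have hsingle : ∀ i : Fin (2 * g),
      incProdImage {i} = PresentedGroup.of (rels := {surfaceRelator g}) i := fun i => by
    unfold incProdImage
    rw [Finset.sort_singleton]
    simp [PresentedGroup.of]
    rfl
  have hq2 : ∀ i, q i ^ 2 = 1 := by
    intro i
    have h := hπS ((incProdImage {i}) ^ 2) ⟨{i}, Finset.singleton_nonempty i, rfl⟩
    rw [hsingle] at h
    exact (map_pow π _ 2).symm.trans h
  have hinv : ∀ x : SurfaceGroup g ⧸ N, x ^ 2 = 1 → x⁻¹ = x := fun x hx =>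
    inv_eq_of_mul_eq_one_right (by rwa [← pow_two])
  have hcomm' : ∀ i j : Fin (2 * g), i < j → Commute (q i) (q j) := by
    intro i j hij
    have hpair : incProdImage {i, j} =
        PresentedGroup.mk {surfaceRelator g} (FreeGroup.of i * FreeGroup.of j) := by
      unfold incProdImage
      rw [Finset.sort_insert (· ≤ ·) (by simpa using hij.le)
        (by simp [Finset.mem_singleton, hij.ne]), Finset.sort_singleton]
      simp
      rfl
    have h2 : (q i * q j) ^ 2 = 1 := by
      have h := hπS ((incProdImage {i, j}) ^ 2) ⟨{i, j}, ⟨i, by simp⟩, rfl⟩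
      rw [hpair] at h
      have e := (map_pow π _ 2).symm.trans h
      exact (congrArg (· ^ 2) (map_mul π (PresentedGroup.of i) (PresentedGroup.of j))).symm.trans e
    have h3 : q i * q j = (q i * q j)⁻¹ := (hinv _ h2).symm
    rw [mul_inv_rev, hinv _ (hq2 i), hinv _ (hq2 j)] at h3
    exact h3
  have hcomm : ∀ i j : Fin (2 * g), Commute (q i) (q j) := by
    intro i j
    rcases lt_trichotomy i j with h | h | h
    · exact hcomm' i j h
    · rw [h]
    · exact (hcomm' j i h).symm
  have hgen : Subgroup.closure (Set.range q) = ⊤ := by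
    have h1 : Subgroup.closure (Set.range
        (PresentedGroup.of : Fin (2 * g) → PresentedGroup {surfaceRelator g})) = ⊤ :=
      PresentedGroup.closure_range_of _
    have h2 : Set.range q = π '' Set.range
        (PresentedGroup.of : Fin (2 * g) → PresentedGroup {surfaceRelator g}) := by
      exact Set.range_comp π (PresentedGroup.of : Fin (2 * g) → SurfaceGroup g)
    rw [h2, ← MonoidHom.map_closure]
    refine (congrArg (Subgroup.map π) h1).trans ?_
    exact Subgroup.map_top_of_surjective π (QuotientGroup.mk'_surjective N)
  have comm : ∀ a b : SurfaceGroup g ⧸ N, a * b = b * a := by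
    intro a b
    have ha : a ∈ Subgroup.closure (Set.range q) := hgen ▸ Subgroup.mem_top a
    have hb : b ∈ Subgroup.closure (Set.range q) := hgen ▸ Subgroup.mem_top b
    refine Subgroup.closure_induction₂ (p := fun x y _ _ => Commute x y)
      ?_ ?_ ?_ ?_ ?_ ?_ ?_ ha hb
    · rintro x y ⟨i, rfl⟩ ⟨j, rfl⟩; exact hcomm i j
    · intro x _; exact Commute.one_left x
    · intro x _; exact Commute.one_right x
    · intro x y z _ _ _ h1 h2; exact h1.mul_left h2
    · intro y z x _ _ _ h1 h2; exact h1.mul_right h2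
    · intro x y _ _ h1; exact h1.inv_left
    · intro x y _ _ h1; exact h1.inv_right
  letI : CommGroup (SurfaceGroup g ⧸ N) :=
    { (inferInstance : Group (SurfaceGroup g ⧸ N)) with mul_comm := comm }
  let Ψ : Multiplicative (Fin (2 * g) → ZMod 2) →* SurfaceGroup g ⧸ N :=
    MonoidHom.mk' (fun v => ∏ i, q i ^ (Multiplicative.toAdd v i).val) (by
      intro v w
      rw [← Finset.prod_mul_distrib]
      refine Finset.prod_congr rfl fun i _ => ?_
      have h : Multiplicative.toAdd (v * w) i
          = Multiplicative.toAdd v i + Multiplicative.toAdd w i := rfl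
      rw [h, ZMod.val_add, ← pow_eq_pow_mod _ (hq2 i), pow_add])
  have key : Ψ.comp (surfaceMod2 g) = π := by
    refine PresentedGroup.ext fun i => ?_
    have h1 : surfaceMod2 g (PresentedGroup.of i)
        = Multiplicative.ofAdd (Pi.single i 1 : Fin (2 * g) → ZMod 2) :=
      PresentedGroup.toGroup.of (surfaceRelator_maps_to_one_mod2 g)
    show Ψ (surfaceMod2 g (PresentedGroup.of i)) = π (PresentedGroup.of i)
    rw [h1]
    show (∏ j, q j ^ ((Pi.single i 1 : Fin (2 * g) → ZMod 2) j).val) = q i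
    rw [Finset.prod_eq_single i
      (fun j _ hj => by rw [Pi.single_eq_of_ne hj, ZMod.val_zero, pow_zero])
      (fun h => absurd (Finset.mem_univ i) h)]
    rw [Pi.single_eq_same, show (1 : ZMod 2).val = 1 from rfl, pow_one]
  apply le_antisymm
  · intro x hx
    have h1 : π x = 1 := by
      have := congrArg (fun f : SurfaceGroup g →* SurfaceGroup g ⧸ N => f x) key
      simp only [MonoidHom.comp_apply] at this
      rw [← this, MonoidHom.mem_ker.mp hx, map_one]
    rwa [← QuotientGroup.ker_mk' N, MonoidHom.mem_ker]
  · refine Subgroup.normalClosure_le_normal ?_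
    rintro x ⟨A, hA, rfl⟩
    show surfaceMod2 g ((incProdImage A) ^ 2) = 1
    rw [map_pow]
    exact sq_one _
end

section
/- Fix g ≥ 2. The homomorphism FreeGroup (Fin (2g − 1)) →* SurfaceGroup g sending the first g free generators to a₁,…,a_g and the remaining g − 1 free generators to b₁,…,b_{g−1} is injective. In other words, any 2g − 1 of the standard generators of the surface group (omitting b_g) freely generate a free subgroup. -/
open scoped commutatorElement

/-- The homomorphism `FreeGroup (Fin (2g − 1)) →* SurfaceGroup g` sending the
first `g` free generators to `a₁,…,a_g` and the remaining `g − 1` free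
generators to `b₁,…,b_{g−1}` (i.e. the `i`-th generator, `0 ≤ i < 2g − 1`, goes
to the image of the `i`-th free generator of `FreeGroup (Fin (2g))`). -/
def omitLastHom (g : ℕ) : FreeGroup (Fin (2 * g - 1)) →* SurfaceGroup g :=
  FreeGroup.lift fun i =>
    PresentedGroup.of (⟨i.1, by omega⟩ : Fin (2 * g))

namespace SurfaceFreiheit

open Subgroup

/-- `Multiplicative ℤ →* zpowers x`. -/
def toZp {G : Type*} [Group G] (x : G) : Multiplicative ℤ →* Subgroup.zpowers x where
  toFun n := ⟨x ^ n.toAdd, n.toAdd, rfl⟩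
  map_one' := by ext; simp
  map_mul' a b := by ext; simp [zpow_add]

theorem toZp_bijective {G : Type*} [Group G] {x : G} (hx : ¬ IsOfFinOrder x) :
    Function.Bijective (toZp x) := by
  constructor
  · intro a b h
    have h' : x ^ (Multiplicative.toAdd a) = x ^ (Multiplicative.toAdd b) :=
      congrArg Subtype.val h
    have := injective_zpow_iff_not_isOfFinOrder.2 hx h'
    exact Multiplicative.toAdd.injective this
  · rintro ⟨v, k, hk⟩
    exact ⟨Multiplicative.ofAdd k, Subtype.ext hk⟩

/-- The isomorphism `zpowers x ≃* zpowers y` for two elements of infinite order, sending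
`x ^ n` to `y ^ n`. -/
noncomputable def zpowEquiv {G : Type*} [Group G] {x y : G}
    (hx : ¬ IsOfFinOrder x) (hy : ¬ IsOfFinOrder y) :
    Subgroup.zpowers x ≃* Subgroup.zpowers y :=
  (MulEquiv.ofBijective (toZp x) (toZp_bijective hx)).symm.trans
    (MulEquiv.ofBijective (toZp y) (toZp_bijective hy))

theorem zpowEquiv_self {G : Type*} [Group G] {x y : G}
    (hx : ¬ IsOfFinOrder x) (hy : ¬ IsOfFinOrder y) :
    zpowEquiv hx hy ⟨x, Subgroup.mem_zpowers x⟩ = ⟨y, Subgroup.mem_zpowers y⟩ := by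
  have h1 : (MulEquiv.ofBijective (toZp x) (toZp_bijective hx)) (Multiplicative.ofAdd 1)
      = ⟨x, Subgroup.mem_zpowers x⟩ := by
    apply Subtype.ext
    simp [MulEquiv.ofBijective, toZp]
  have h2 : (MulEquiv.ofBijective (toZp x) (toZp_bijective hx)).symm
      ⟨x, Subgroup.mem_zpowers x⟩ = Multiplicative.ofAdd 1 := by
    rw [← h1, MulEquiv.symm_apply_apply]
  rw [zpowEquiv, MulEquiv.trans_apply, h2]
  apply Subtype.ext
  simp [MulEquiv.ofBijective, toZp]

variable (g : ℕ)

/-- The commutator sequence in `FreeGroup (Fin (2*g))`. -/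
def cBig (n : ℕ) : FreeGroup (Fin (2 * g)) :=
  if h : n < g then
    ⁅FreeGroup.of (⟨n, by omega⟩ : Fin (2 * g)),
     FreeGroup.of (⟨g + n, by omega⟩ : Fin (2 * g))⁆
  else 1

/-- The commutator sequence in `FreeGroup (Fin (2*g - 1))`. -/
def cSmall (n : ℕ) : FreeGroup (Fin (2 * g - 1)) :=
  if h : n < g - 1 then
    ⁅FreeGroup.of (⟨n, by omega⟩ : Fin (2 * g - 1)),
     FreeGroup.of (⟨g + n, by omega⟩ : Fin (2 * g - 1))⁆
  else 1

theorem surfaceRelator_eq : surfaceRelator g = ((List.range g).map (cBig g)).prod := by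
  rw [surfaceRelator, ← List.map_coe_finRange_eq_range, List.map_map]
  congr 1
  apply List.map_congr_left
  intro i _
  simp only [Function.comp_apply, cBig, dif_pos i.2]

/-- `a_g` as an element of the free group on `2g - 1` generators. -/
def xElt (hg : 2 ≤ g) : FreeGroup (Fin (2 * g - 1)) := FreeGroup.of ⟨g - 1, by omega⟩

/-- `P = ∏_{i<g-1} ⁅aᵢ,bᵢ⁆`. -/
def PElt : FreeGroup (Fin (2 * g - 1)) := ((List.range (g - 1)).map (cSmall g)).prod

theorem PElt_def : PElt g = ((List.range (g - 1)).map (cSmall g)).prod := rfl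

/-- exponent-sum homomorphism detecting `a_g` -/
def chi : FreeGroup (Fin (2 * g - 1)) →* Multiplicative ℤ :=
  FreeGroup.lift fun i => if i.1 = g - 1 then Multiplicative.ofAdd 1 else 1

theorem not_isOfFinOrder_ofAdd_one : ¬ IsOfFinOrder (Multiplicative.ofAdd (1 : ℤ)) := by
  rw [isOfFinOrder_iff_pow_eq_one]
  rintro ⟨n, hn, h⟩
  rw [← ofAdd_nsmul] at h
  simp at h
  omega

theorem not_isOfFinOrder_of_chi {w : FreeGroup (Fin (2 * g - 1))}
    (hw : chi g w = Multiplicative.ofAdd 1) : ¬ IsOfFinOrder w := by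
  intro h
  exact not_isOfFinOrder_ofAdd_one (hw ▸ (chi g).isOfFinOrder h)

theorem chi_xElt (hg : 2 ≤ g) : chi g (xElt g hg) = Multiplicative.ofAdd 1 := by
  rw [xElt, chi, FreeGroup.lift_apply_of, if_pos rfl]

theorem chi_PElt : chi g (PElt g) = 1 := by
  rw [PElt, map_list_prod, List.map_map]
  apply List.prod_eq_one
  intro a ha
  rw [List.mem_map] at ha
  obtain ⟨n, _, rfl⟩ := ha
  simp only [Function.comp_apply, cSmall]
  split
  · rw [map_commutatorElement]
    exact commutatorElement_eq_one_iff_mul_comm.2 (mul_comm _ _)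
  · exact map_one _

theorem not_isOfFinOrder_xElt (hg : 2 ≤ g) : ¬ IsOfFinOrder (xElt g hg) :=
  not_isOfFinOrder_of_chi g (chi_xElt g hg)

theorem not_isOfFinOrder_yElt (hg : 2 ≤ g) : ¬ IsOfFinOrder (PElt g * xElt g hg) := by
  apply not_isOfFinOrder_of_chi
  rw [map_mul, chi_PElt, one_mul, chi_xElt]

/-- The HNN extension realizing the surface group. -/
noncomputable abbrev HNNE (hg : 2 ≤ g) : Type :=
  HNNExtension (FreeGroup (Fin (2 * g - 1)))
    (Subgroup.zpowers (xElt g hg)) (Subgroup.zpowers (PElt g * xElt g hg))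
    (zpowEquiv (not_isOfFinOrder_xElt g hg) (not_isOfFinOrder_yElt g hg))

/-- The generator map `Fin (2g) → HNNE`. -/
noncomputable def genMap (hg : 2 ≤ g) (j : Fin (2 * g)) : HNNE g hg :=
  if h : j.1 < 2 * g - 1 then HNNExtension.of (FreeGroup.of ⟨j.1, h⟩) else HNNExtension.t

theorem lift_relator (hg : 2 ≤ g) :
    FreeGroup.lift (genMap g hg) (surfaceRelator g) = 1 := by
  have key : HNNExtension.t * HNNExtension.of (xElt g hg) * HNNExtension.t⁻¹
      = (HNNExtension.of (PElt g * xElt g hg) :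
          HNNE g hg) := by
    have := HNNExtension.equiv_eq_conj
      (φ := zpowEquiv (not_isOfFinOrder_xElt g hg) (not_isOfFinOrder_yElt g hg))
      ⟨xElt g hg, Subgroup.mem_zpowers _⟩
    rw [zpowEquiv_self] at this
    exact this.symm
  rw [surfaceRelator_eq, map_list_prod, List.map_map]
  have hsplit : List.range g = List.range (g - 1) ++ [g - 1] := by
    have : g = (g - 1) + 1 := by omega
    rw [this, List.range_succ]
    simp
  rw [hsplit, List.map_append, List.prod_append]
  have hsmall : ((List.range (g - 1)).map (FreeGroup.lift (genMap g hg) ∘ cBig g)).prod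
      = HNNExtension.of (PElt g) := by
    have hlist : (List.range (g - 1)).map (FreeGroup.lift (genMap g hg) ∘ cBig g)
        = ((List.range (g - 1)).map (cSmall g)).map (HNNExtension.of :
            FreeGroup (Fin (2 * g - 1)) →* HNNE g hg) := by
      rw [List.map_map]
      apply List.map_congr_left
      intro n hn
      rw [List.mem_range] at hn
      simp only [Function.comp_apply, cBig, cSmall, dif_pos (by omega : n < g),
        dif_pos hn, map_commutatorElement, map_commutatorElement, FreeGroup.lift_apply_of,
        FreeGroup.lift_apply_of, genMap, dif_pos (by omega : n < 2 * g - 1),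
        dif_pos (by omega : g + n < 2 * g - 1)]
    rw [hlist, ← map_list_prod]
    rfl
  have hlast : FreeGroup.lift (genMap g hg) (cBig g (g - 1))
      = HNNExtension.of (xElt g hg) * HNNExtension.t *
        (HNNExtension.of (xElt g hg))⁻¹ * HNNExtension.t⁻¹ := by
    rw [cBig, dif_pos (by omega : g - 1 < g), map_commutatorElement,
      FreeGroup.lift_apply_of, FreeGroup.lift_apply_of, genMap, genMap,
      dif_pos (by omega : g - 1 < 2 * g - 1), dif_neg (by omega : ¬ g + (g - 1) < 2 * g - 1)]
    rw [commutatorElement_def]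
    rfl
  simp only [List.map_cons, List.map_nil, List.prod_cons, List.prod_nil, mul_one,
    Function.comp_apply]
  rw [hsmall, hlast]
  rw [map_mul] at key
  have h2 : (HNNExtension.of (PElt g) : HNNE g hg) *
        (HNNExtension.of (xElt g hg) * HNNExtension.t *
          (HNNExtension.of (xElt g hg))⁻¹ * HNNExtension.t⁻¹)
      = (HNNExtension.of (PElt g) * HNNExtension.of (xElt g hg)) *
        (HNNExtension.t * HNNExtension.of (xElt g hg) * HNNExtension.t⁻¹)⁻¹ := by
    simp [mul_inv_rev, mul_assoc]
  rw [h2, key]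
  group

/-- The homomorphism `SurfaceGroup g →* HNNE g hg`. -/
noncomputable def toHNN (hg : 2 ≤ g) : SurfaceGroup g →* HNNE g hg :=
  PresentedGroup.toGroup (f := genMap g hg) (by
    rintro r hr
    rw [Set.mem_singleton_iff] at hr
    subst hr
    exact lift_relator g hg)

theorem toHNN_comp (hg : 2 ≤ g) (w : FreeGroup (Fin (2 * g - 1))) :
    toHNN g hg (omitLastHom g w) = HNNExtension.of w := by
  have : (toHNN g hg).comp (omitLastHom g)
      = (HNNExtension.of : FreeGroup (Fin (2 * g - 1)) →*
          HNNE g hg) := by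
    apply FreeGroup.ext_hom
    intro i
    simp only [MonoidHom.comp_apply, omitLastHom, FreeGroup.lift_apply_of]
    have h1 : (toHNN g hg) (PresentedGroup.of (⟨i.1, by omega⟩ : Fin (2 * g)))
        = genMap g hg ⟨i.1, by omega⟩ := PresentedGroup.toGroup.of _
    change (toHNN g hg) (PresentedGroup.of (⟨i.1, by omega⟩ : Fin (2 * g))) = _
    rw [h1, genMap, dif_pos (by exact i.2 : (⟨i.1, by omega⟩ : Fin (2 * g)).1 < 2 * g - 1)]
  exact DFunLike.congr_fun this w

end SurfaceFreiheit

/-- Freiheitssatz for the surface group: the `2g − 1` standard generators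
`a₁,…,a_g, b₁,…,b_{g−1}` (omitting `b_g`) freely generate a free subgroup. -/
theorem omitLastHom_injective (g : ℕ) (hg : 2 ≤ g) :
    Function.Injective (omitLastHom g) := by
  intro w w' h
  apply HNNExtension.of_injective
  rw [← SurfaceFreiheit.toHNN_comp g hg, ← SurfaceFreiheit.toHNN_comp g hg, h]
end
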